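/- Let θ : [s₁, ∞) → ℝ be a solution of θ'(s) = −θ(s)²/2 − R(s) with R(s) ≥ 0 continuous, and suppose θ(s₀) < 0 for some s₀ ≥ s₁. Then θ(s) < 0 for all s ≥ s₀ in the maximal interval of existence; moreover the solution blows up to −∞ at some finite s* ≤ s₀ + 2/|θ(s₀)|. -/

import Mathlib

open Set Filter

/-- focusing property of the Raychaudhuri equation. If `θ` solves
`θ' = -θ²/2 - R` with `R ≥ 0` continuous on its (maximal) interval of existence
`[s₁, T)`, and `θ(s₀) < 0` at some `s₀ ≥ s₁`, then `θ` stays negative for all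
later parameters in the interval of existence, and the solution blows up at a
finite `s* ≤ s₀ + 2/|θ(s₀)|`, i.e. `T ≤ s₀ + 2/|θ(s₀)|`. -/
theorem raychaudhuri_focusing (s₁ T s₀ : ℝ) (θ R : ℝ → ℝ)
    (hR_cont : ContinuousOn R (Ici s₁)) (hR_pos : ∀ s ∈ Ici s₁, 0 ≤ R s)
    (hode : ∀ s ∈ Ico s₁ T, HasDerivAt θ (- θ s ^ 2 / 2 - R s) s)
    (hs₀ : s₀ ∈ Ico s₁ T) (hneg : θ s₀ < 0) :
    (∀ s ∈ Ico s₀ T, θ s < 0) ∧ T ≤ s₀ + 2 / |θ s₀| := by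
  obtain ⟨hs₀1, hs₀T⟩ := hs₀
  -- θ is antitone on [s₁, T)
  have hanti : AntitoneOn θ (Ico s₁ T) := by
    apply antitoneOn_of_hasDerivWithinAt_nonpos (f' := fun s => - θ s ^ 2 / 2 - R s)
      (convex_Ico s₁ T)
    · exact fun x hx => (hode x hx).continuousAt.continuousWithinAt
    · intro x hx
      rw [interior_Ico] at hx
      exact (hode x (Ioo_subset_Ico_self hx)).hasDerivWithinAt
    · intro x hx
      rw [interior_Ico] at hx
      have h1 : 0 ≤ R x := hR_pos x (le_of_lt hx.1)
      nlinarith [sq_nonneg (θ x)]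
  have part1 : ∀ s ∈ Ico s₀ T, θ s < 0 := by
    intro s hs
    exact lt_of_le_of_lt (hanti ⟨hs₀1, hs₀T⟩ ⟨le_trans hs₀1 hs.1, hs.2⟩ hs.1) hneg
  refine ⟨part1, ?_⟩
  by_contra h
  push_neg at h
  set c := s₀ + 2 / |θ s₀| with hc
  have hθ0 : θ s₀ ≠ 0 := ne_of_lt hneg
  have habs : |θ s₀| = -θ s₀ := abs_of_neg hneg
  have hpos : 0 < 2 / |θ s₀| := by positivity
  have hs₀c : s₀ ≤ c := le_add_of_nonneg_right hpos.le
  have hsub : Icc s₀ c ⊆ Ico s₁ T := fun x hx =>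
    ⟨le_trans hs₀1 hx.1, lt_of_le_of_lt hx.2 h⟩
  have hsub' : Icc s₀ c ⊆ Ico s₀ T := fun x hx => ⟨hx.1, lt_of_le_of_lt hx.2 h⟩
  -- w = 1/θ - s/2 is monotone on [s₀, c]
  have hw : ∀ x ∈ Icc s₀ c,
      HasDerivAt (fun y => (θ y)⁻¹ - y / 2) (R x / θ x ^ 2) x := by
    intro x hx
    have hθx : θ x ≠ 0 := ne_of_lt (part1 x (hsub' hx))
    have h1 := ((hode x (hsub hx)).inv hθx).sub ((hasDerivAt_id x).div_const 2)
    refine h1.congr_deriv ?_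
    field_simp
    ring
  have hmono : MonotoneOn (fun y => (θ y)⁻¹ - y / 2) (Icc s₀ c) := by
    apply monotoneOn_of_hasDerivWithinAt_nonneg (f' := fun x => R x / θ x ^ 2)
      (convex_Icc s₀ c)
    · exact fun x hx => (hw x hx).continuousAt.continuousWithinAt
    · intro x hx
      rw [interior_Icc] at hx
      exact (hw x (Ioo_subset_Icc_self hx)).hasDerivWithinAt
    · intro x hx
      rw [interior_Icc] at hx
      exact div_nonneg (hR_pos x (le_trans hs₀1 (le_of_lt hx.1))) (sq_nonneg _)
  have hkey := hmono (left_mem_Icc.mpr hs₀c) (right_mem_Icc.mpr hs₀c) hs₀c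
  simp only at hkey
  have hθc : θ c < 0 := part1 c (hsub' (right_mem_Icc.mpr hs₀c))
  have hic : (θ c)⁻¹ < 0 := inv_lt_zero.mpr hθc
  have his : (θ s₀)⁻¹ = -(2 / |θ s₀|) / 2 := by
    rw [habs]; field_simp
  rw [his] at hkey
  have : (θ c)⁻¹ - c / 2 = (θ c)⁻¹ - s₀ / 2 - (2 / |θ s₀|) / 2 := by
    rw [hc]; ring
  linarith [hkey, this]
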